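/- Define x1 = ηα(δ + v_s + b), x2 = λ_o(δ + b)(λ + b) + λ_o v_s(δq + b) + ηω_o(δ + v_s + b) − ηα(b + δ − v_i), x3 = λ_o δ p v_i + ηω_o(b + δ − v_i), h_a = (−x2 + √(x2² + 4x1x3))/(2x1), and h_n = λ_o[b − v_i + δq(1 − h_a) + λh_a]/[η(ω_o + αh_a) + λ_o(δq + b)]. Then h_n > 0 and h_n + h_a < 1; consequently all components of the disease-free steady state E_0 = (Nh_n, Nh_a, 0, N(1 − h_n − h_a), (ω_o + αh_a)/λ_o) are positive, so E_0 is biologically feasible for all parameter values. -/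
import Mathlib
set_option maxHeartbeats 1000000


/-- Biological feasibility of the disease-free steady state `E₀` of model (2):
`h_n > 0`, `h_n + h_a < 1`, and all components of `E₀` are positive. -/
theorem disease_free_steady_state_feasible
    (b eta lam lamo alpha omegao delta vs N p q vi : ℝ)
    (hb : 0 < b) (heta : 0 < eta) (hlam : 0 < lam) (hlamo : 0 < lamo)
    (halpha : 0 < alpha) (homegao : 0 < omegao) (hdelta : 0 < delta)
    (hvs : 0 < vs) (hN : 0 < N)
    (hp0 : 0 ≤ p) (hp1 : p ≤ 1) (hq : q = 1 - p)
    (hvi0 : 0 < vi) (hvib : vi < b)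
    (x1 x2 x3 ha hn : ℝ)
    (hx1 : x1 = eta * alpha * (delta + vs + b))
    (hx2 : x2 = lamo * (delta + b) * (lam + b) + lamo * vs * (delta * q + b)
      + eta * omegao * (delta + vs + b) - eta * alpha * (b + delta - vi))
    (hx3 : x3 = lamo * delta * p * vi + eta * omegao * (b + delta - vi))
    (hha : ha = (-x2 + Real.sqrt (x2 ^ 2 + 4 * x1 * x3)) / (2 * x1))
    (hhn : hn = lamo * (b - vi + delta * q * (1 - ha) + lam * ha)
      / (eta * (omegao + alpha * ha) + lamo * (delta * q + b))) :
    0 < hn ∧ hn + ha < 1 ∧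
    0 < N * hn ∧ 0 < N * ha ∧ 0 < N * (1 - hn - ha) ∧
    0 < (omegao + alpha * ha) / lamo := by

  have hq0 : 0 ≤ q := by rw [hq]; linarith
  have hbd : 0 < b + delta - vi := by linarith
  have hx1' : 0 < x1 := by rw [hx1]; positivity
  have hx3' : 0 < x3 := by
    rw [hx3]
    have h1 : 0 ≤ lamo * delta * p * vi := by positivity
    nlinarith [mul_pos (mul_pos heta homegao) hbd]
  -- f(1) > 0 : x3 < x1 + x2
  have hf1 : x3 < x1 + x2 := by
    rw [hx1, hx2, hx3, hq]
    nlinarith [mul_pos hlamo hdelta, mul_pos (mul_pos hlamo hdelta) hvi0,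
      mul_pos hlamo (mul_pos hdelta hb), mul_pos hlamo (mul_pos hlam hb),
      mul_pos hlamo (mul_pos hdelta hlam), mul_pos hlamo (mul_pos hb hb),
      mul_pos (mul_pos heta halpha) (by linarith : (0:ℝ) < vs + vi),
      mul_pos (mul_pos heta homegao) (by linarith : (0:ℝ) < vs + vi),
      mul_nonneg (mul_nonneg hlamo.le hvs.le) (by nlinarith : (0 : ℝ) ≤ delta * (1 - p) + b),
      mul_nonneg (mul_nonneg hlamo.le hdelta.le) (mul_nonneg hp0 hvi0.le)]
  set s : ℝ := Real.sqrt (x2 ^ 2 + 4 * x1 * x3) with hs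
  clear_value s
  have hdisc : 0 < x2 ^ 2 + 4 * x1 * x3 := by positivity
  have hs2 : s ^ 2 = x2 ^ 2 + 4 * x1 * x3 := by rw [hs]; exact Real.sq_sqrt hdisc.le
  have hs0 : 0 ≤ s := by rw [hs]; positivity
  have hspos : 0 < s := by nlinarith [mul_pos hx1' hx3']
  have hsgt : x2 < s := by
    rcases le_or_gt x2 0 with h | h
    · linarith
    · nlinarith [mul_pos hx1' hx3']
  have hha0 : 0 < ha := by
    rw [hha]
    have h1 : (0:ℝ) < -x2 + s := by rw [neg_add_eq_sub]; linarith
    have h2 : (0:ℝ) < 2 * x1 := by linarith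
    exact div_pos h1 h2
  -- s < 2*x1 + x2
  have hslt : s < 2 * x1 + x2 := by
    have hy : 0 < 2 * x1 + x2 := by nlinarith
    rw [hs, Real.sqrt_lt' hy]
    nlinarith [mul_pos hx1' hx1']
  have hha1 : ha < 1 := by
    rw [hha, div_lt_one (by linarith : (0:ℝ) < 2 * x1), neg_add_eq_sub]
    linarith
  -- quadratic relation
  have hfq : x1 * ha ^ 2 + x2 * ha - x3 = 0 := by
    have hx1ne : (x1 : ℝ) ≠ 0 := ne_of_gt hx1'
    have h2 : 2 * x1 * ha = -x2 + s := by
      rw [hha]; field_simp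
    have hsq : (2 * x1 * ha + x2) ^ 2 = x2 ^ 2 + 4 * x1 * x3 := by
      rw [h2]; linear_combination hs2
    have h4 : (4 * x1) * (x1 * ha ^ 2 + x2 * ha - x3) = (4 * x1) * 0 := by
      linear_combination hsq
    exact mul_left_cancel₀ (by positivity) h4
  have hD : 0 < eta * (omegao + alpha * ha) + lamo * (delta * q + b) := by
    have : 0 ≤ delta * q := by positivity
    nlinarith [mul_pos heta homegao, mul_pos hlamo hb,
      mul_pos heta (mul_pos halpha hha0)]
  have hnum : 0 < b - vi + delta * q * (1 - ha) + lam * ha := by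
    have h1 : 0 ≤ delta * q * (1 - ha) := by
      apply mul_nonneg (by positivity); linarith
    nlinarith [mul_pos hlam hha0]
  have hhn0 : 0 < hn := by
    rw [hhn]; exact div_pos (by positivity) hD
  -- key inequality : lamo * num < (1 - ha) * D
  have hT : lamo * (b - vi + delta * q * (1 - ha) + lam * ha)
      < (1 - ha) * (eta * (omegao + alpha * ha) + lamo * (delta * q + b)) := by
    have hid : (delta + b) * (delta + vs + b) *
        ((1 - ha) * (eta * (omegao + alpha * ha) + lamo * (delta * q + b))
          - lamo * (b - vi + delta * q * (1 - ha) + lam * ha)) =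
        (vs * ha * lamo * ((delta + b) * b)
          + eta * alpha * ha * vi * (delta + b + vs)
          + eta * omegao * vi * (delta + b) + vs * vi * (eta * omegao)
          + vs * ha * (eta * omegao) * (delta + vs + b)
          + lamo * vi * ((delta + b) * (delta * q + b) + vs * (delta * q + b))
          + (delta + b) * lamo * vs * (delta * q) * ha
          + vs * ha * lamo * (vs * (delta * q + b))
          + vs * (eta * alpha * (delta + vs + b)) * ha ^ 2)
        - ((delta + b) + vs) * (x1 * ha ^ 2 + x2 * ha - x3) := by
      rw [hx1, hx2, hx3, hq]; ring
    rw [hfq, mul_zero, sub_zero] at hid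
    have hM : 0 < (vs * ha * lamo * ((delta + b) * b)
          + eta * alpha * ha * vi * (delta + b + vs)
          + eta * omegao * vi * (delta + b) + vs * vi * (eta * omegao)
          + vs * ha * (eta * omegao) * (delta + vs + b)
          + lamo * vi * ((delta + b) * (delta * q + b) + vs * (delta * q + b))
          + (delta + b) * lamo * vs * (delta * q) * ha
          + vs * ha * lamo * (vs * (delta * q + b))
          + vs * (eta * alpha * (delta + vs + b)) * ha ^ 2) := by
      have hdq : 0 ≤ delta * q := by positivity
      have h1 : 0 < lamo * vi * ((delta + b) * (delta * q + b) + vs * (delta * q + b)) := by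
        apply mul_pos (by positivity)
        have : 0 < delta * q + b := by linarith
        positivity
      have h2 : 0 ≤ (delta + b) * lamo * vs * (delta * q) * ha := by positivity
      nlinarith [mul_pos (mul_pos (mul_pos hvs hha0) hlamo) (mul_pos (by linarith : (0:ℝ) < delta + b) hb),
        mul_pos (mul_pos (mul_pos (mul_pos heta halpha) hha0) hvi0) (by linarith : (0:ℝ) < delta + b + vs),
        mul_pos (mul_pos (mul_pos heta homegao) hvi0) (by linarith : (0:ℝ) < delta + b),
        mul_pos (mul_pos hvs hvi0) (mul_pos heta homegao),
        mul_pos (mul_pos (mul_pos hvs hha0) (mul_pos heta homegao)) (by linarith : (0:ℝ) < delta + vs + b),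
        mul_pos (mul_pos (mul_pos hvs hha0) hlamo) (mul_pos hvs (by linarith : (0:ℝ) < delta * q + b)),
        mul_nonneg (mul_nonneg hvs.le (by positivity : (0:ℝ) ≤ eta * alpha * (delta + vs + b))) (sq_nonneg ha)]
    have hdbw : 0 < (delta + b) * (delta + vs + b) := by positivity
    by_contra hc
    push_neg at hc
    have hc' : (1 - ha) * (eta * (omegao + alpha * ha) + lamo * (delta * q + b))
        - lamo * (b - vi + delta * q * (1 - ha) + lam * ha) ≤ 0 := by linarith
    have hle : (delta + b) * (delta + vs + b) *
        ((1 - ha) * (eta * (omegao + alpha * ha) + lamo * (delta * q + b))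
          - lamo * (b - vi + delta * q * (1 - ha) + lam * ha)) ≤ 0 :=
      mul_nonpos_of_nonneg_of_nonpos hdbw.le hc'
    linarith [hid, hM, hle]
  have hlt : hn < 1 - ha := by
    rw [hhn, div_lt_iff₀ hD]
    linarith
  refine ⟨hhn0, by linarith, mul_pos hN hhn0, mul_pos hN hha0,
    mul_pos hN (by linarith), div_pos (by positivity) hlamo⟩
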